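/- Let R be a commutative ring, G a finite group, and u ∈ RG a unit with inverse u⁻¹ (so uu⁻¹ = u⁻¹u = 1). Let S ⊆ G, let W be the R-span of S in RG, and let W^⊥ be the R-span of G∖S. Then the dual of the unit-derived code C = {xu : x ∈ W}, namely C^⊥ = {y ∈ RG : ⟨xu, y⟩ = 0 for all x ∈ W}, equals {x·(u⁻¹)ᵀ : x ∈ W^⊥}. -/

import Mathlib

/-- The transpose `wᵀ = Σ_g α_g g⁻¹` of a group ring element `w = Σ_g α_g g`. -/
noncomputable def grT {R : Type*} [Semiring R] {G : Type*} [Group G]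
    (w : MonoidAlgebra R G) : MonoidAlgebra R G :=
  MonoidAlgebra.ofCoeff (Finsupp.equivMapDomain (Equiv.inv G) w.coeff)

/-- The inner product `⟨x, y⟩ = Σ_g α_g β_g` of group ring elements. -/
noncomputable def grInner {R : Type*} [Semiring R] {G : Type*} [Fintype G]
    (x y : MonoidAlgebra R G) : R :=
  ∑ h : G, x.coeff h * y.coeff h

section aux
variable {R : Type*} [CommRing R] {G : Type*} [Group G] [Fintype G]

lemma grT_apply (w : MonoidAlgebra R G) (g : G) : (grT w).coeff g = w.coeff g⁻¹ := by
  simp [grT, Finsupp.equivMapDomain_apply]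

lemma mul_apply_fin (f g : MonoidAlgebra R G) (x : G) :
    (f * g).coeff x = ∑ a : G, f.coeff a * g.coeff (a⁻¹ * x) := by
  rw [MonoidAlgebra.coeff_mul_apply_left]
  exact Finsupp.sum_fintype _ _ (by simp)

lemma grT_mul (a b : MonoidAlgebra R G) : grT a * grT b = grT (b * a) := by
  ext g
  rw [mul_apply_fin, grT_apply, mul_apply_fin]
  rw [← Fintype.sum_equiv (Equiv.mulLeft g)
      (fun h => (grT a).coeff (g * h) * (grT b).coeff ((g * h)⁻¹ * g)) _ (fun h => rfl)]
  refine Fintype.sum_congr _ _ fun k => ?_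
  rw [grT_apply, grT_apply]
  simp [mul_comm, mul_inv_rev]

lemma grT_one : grT (1 : MonoidAlgebra R G) = 1 := by
  ext g
  rw [grT_apply]
  simp only [MonoidAlgebra.one_def]
  classical
  simp [MonoidAlgebra.coeff_single_apply, Finsupp.single_apply, eq_comm, inv_eq_one]

lemma grInner_single (g : G) (z : MonoidAlgebra R G) :
    grInner (MonoidAlgebra.of R G g) z = z.coeff g := by
  classical
  simp [grInner, MonoidAlgebra.of_apply, MonoidAlgebra.coeff_single_apply, Finsupp.single_apply, ite_mul]

lemma grInner_mul (x u y : MonoidAlgebra R G) :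
    grInner (x * u) y = grInner x (y * grT u) := by
  unfold grInner
  simp_rw [mul_apply_fin, Finset.sum_mul, Finset.mul_sum]
  rw [Finset.sum_comm]
  refine Fintype.sum_congr _ _ fun h => Fintype.sum_congr _ _ fun g => ?_
  rw [grT_apply, mul_inv_rev, inv_inv]
  ring

lemma span_eq_supported (T : Set G) :
    Submodule.span R (MonoidAlgebra.of R G '' T) = MonoidAlgebra.supported R R T := by
  rw [MonoidAlgebra.supported_eq_span_single]
  rfl

end aux

/-- let `R` be a commutative ring, `G` a finite group, `u` a unit of
`RG` with inverse `uinv`, `S ⊆ G`, `W = span S`, `W^⊥ = span (G \ S)`. Then the dual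
of the unit-derived code `C = {x u : x ∈ W}` equals `{x (u⁻¹)ᵀ : x ∈ W^⊥}`. -/
theorem stmt14 {R : Type*} [CommRing R] {G : Type*} [Group G] [Fintype G]
    (u uinv : MonoidAlgebra R G)
    (h1 : u * uinv = 1) (h2 : uinv * u = 1)
    (S : Set G) :
    {y : MonoidAlgebra R G |
        ∀ x ∈ Submodule.span R (MonoidAlgebra.of R G '' S), grInner (x * u) y = 0}
      = {y : MonoidAlgebra R G |
          ∃ x ∈ Submodule.span R (MonoidAlgebra.of R G '' Sᶜ), y = x * grT uinv} := by
  ext y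
  simp only [Set.mem_setOf_eq]
  constructor
  · intro hy
    refine ⟨y * grT u, ?_, ?_⟩
    · rw [span_eq_supported, MonoidAlgebra.mem_supported']
      intro g hg
      have hgS : g ∈ S := by simpa using hg
      have := hy (MonoidAlgebra.of R G g)
        (Submodule.subset_span ⟨g, hgS, rfl⟩)
      rwa [grInner_mul, grInner_single] at this
    · rw [mul_assoc, grT_mul, h2, grT_one, mul_one]
  · rintro ⟨x, hx, rfl⟩
    rw [span_eq_supported, MonoidAlgebra.mem_supported'] at hx
    intro v hv
    rw [grInner_mul, mul_assoc, grT_mul, h1, grT_one, mul_one]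
    induction hv using Submodule.span_induction with
    | mem w hw =>
        obtain ⟨g, hgS, rfl⟩ := hw
        rw [grInner_single]
        exact hx g (by simpa using hgS)
    | zero => simp [grInner]
    | add a b _ _ ha hb =>
        unfold grInner at ha hb ⊢
        have e : ∀ h : G, (a + b).coeff h = a.coeff h + b.coeff h := fun h => rfl
        simp only [e, add_mul, Finset.sum_add_distrib, ha, hb, add_zero]
    | smul r a _ ha =>
        unfold grInner at ha ⊢
        have e : ∀ h : G, (r • a).coeff h = r * a.coeff h := fun h => rfl
        simp only [e, mul_assoc, ← Finset.mul_sum, ha, mul_zero]
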